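/- Let Φ̄ : ℝ → [0,1] be nonincreasing with Φ̄(0) > 0, and suppose that for every M > 0, Φ̄(t − M)/F̄(t) → 0 as t → ∞. Define R(K) = (∫₀^∞ t f(t) Φ̄(K − t) dt) / (∫₀^∞ f(t) Φ̄(K − t) dt) for K > 0. Then R(K) → ∞ as K → ∞. -/

import Mathlib

open MeasureTheory Filter Set

/-- With `f` a probability density on `(0,∞)` with unit mean and positive
tail cdf `F̄`: let `Φ̄ : ℝ → [0,1]` be nonincreasing with `Φ̄(0) > 0` and suppose that for
every `M > 0`, `Φ̄(t - M)/F̄(t) → 0` as `t → ∞`. Then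
`R(K) = (∫₀^∞ t f(t) Φ̄(K-t) dt)/(∫₀^∞ f(t) Φ̄(K-t) dt) → ∞` as `K → ∞`. -/
theorem stmt_16
    (f : ℝ → ℝ) (hf_meas : Measurable f) (hf_nonneg : ∀ t, 0 ≤ f t)
    (hf_prob : ∫ t in Ioi (0:ℝ), f t = 1)
    (hf_mean : ∫ t in Ioi (0:ℝ), t * f t = 1)
    (Fbar : ℝ → ℝ)
    (hFbar : ∀ x, Fbar x = 1 - ∫ t in Ioc (0:ℝ) x, f t)
    (hFbar_pos : ∀ x, 0 ≤ x → 0 < Fbar x)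
    (Φ : ℝ → ℝ) (hΦ_range : ∀ t, Φ t ∈ Icc (0:ℝ) 1) (hΦ_anti : Antitone Φ)
    (hΦ0 : 0 < Φ 0)
    (hlight : ∀ M : ℝ, 0 < M →
      Tendsto (fun t : ℝ => Φ (t - M) / Fbar t) atTop (nhds 0))
    (R : ℝ → ℝ)
    (hR : ∀ K, R K = (∫ t in Ioi (0:ℝ), t * f t * Φ (K - t)) /
      ∫ t in Ioi (0:ℝ), f t * Φ (K - t)) :
    Tendsto R atTop atTop := by
  -- integrability of f and t*f on (0,∞)
  have hf_int : IntegrableOn f (Ioi (0:ℝ)) := by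
    by_contra h
    rw [integral_undef h] at hf_prob
    norm_num at hf_prob
  have htf_int : IntegrableOn (fun t => t * f t) (Ioi (0:ℝ)) := by
    by_contra h
    rw [integral_undef h] at hf_mean
    norm_num at hf_mean
  have hΦ_meas : Measurable Φ := hΦ_anti.measurable
  have hΦK_meas : ∀ K : ℝ, Measurable fun t => Φ (K - t) :=
    fun K => hΦ_meas.comp (measurable_const.sub measurable_id)
  -- integrability of the integrands
  have hD_int : ∀ K : ℝ, IntegrableOn (fun t => f t * Φ (K - t)) (Ioi (0:ℝ)) := by
    intro K
    apply Integrable.mono' hf_int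
      ((hf_meas.mul (hΦK_meas K)).aestronglyMeasurable)
    filter_upwards with t
    rw [Real.norm_eq_abs, Pi.mul_apply, abs_mul, abs_of_nonneg (hf_nonneg t),
      abs_of_nonneg (hΦ_range (K - t)).1]
    nlinarith [(hΦ_range (K - t)).2, hf_nonneg t]
  have hN_int : ∀ K : ℝ, IntegrableOn (fun t => t * f t * Φ (K - t)) (Ioi (0:ℝ)) := by
    intro K
    apply Integrable.mono' htf_int
      (((measurable_id.mul hf_meas).mul (hΦK_meas K)).aestronglyMeasurable)
    filter_upwards [ae_restrict_mem measurableSet_Ioi] with t ht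
    simp only [Pi.mul_apply, id_eq]
    rw [Real.norm_eq_abs, abs_mul, abs_mul, abs_of_nonneg (hf_nonneg t),
      abs_of_nonneg (hΦ_range (K - t)).1, abs_of_nonneg (le_of_lt ht)]
    have ht' : (0:ℝ) < t := ht
    nlinarith [(hΦ_range (K - t)).2, mul_nonneg (le_of_lt ht') (hf_nonneg t)]
  -- splitting lemma
  have hsplit : ∀ g : ℝ → ℝ, IntegrableOn g (Ioi (0:ℝ)) → ∀ A : ℝ, 0 ≤ A →
      ∫ t in Ioi (0:ℝ), g t = (∫ t in Ioc (0:ℝ) A, g t) + ∫ t in Ioi A, g t := by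
    intro g hg A hA
    rw [← setIntegral_union (Ioc_disjoint_Ioi le_rfl) measurableSet_Ioi
        (hg.mono_set Ioc_subset_Ioi_self) (hg.mono_set (Ioi_subset_Ioi hA)),
      Ioc_union_Ioi_eq_Ioi hA]
  -- tail identity for Fbar
  have hFbar' : ∀ K : ℝ, 0 ≤ K → Fbar K = ∫ t in Ioi K, f t := by
    intro K hK
    have := hsplit f hf_int K hK
    rw [hf_prob] at this
    rw [hFbar K]
    linarith
  -- lower bound on denominator
  have hD_lb : ∀ K : ℝ, 0 ≤ K →
      Φ 0 * Fbar K ≤ ∫ t in Ioi (0:ℝ), f t * Φ (K - t) := by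
    intro K hK
    have h1 : ∫ t in Ioi K, f t * Φ 0 ≤ ∫ t in Ioi K, f t * Φ (K - t) := by
      apply setIntegral_mono_on
      · exact (hf_int.mono_set (Ioi_subset_Ioi hK)).mul_const _
      · exact (hD_int K).mono_set (Ioi_subset_Ioi hK)
      · exact measurableSet_Ioi
      · intro t ht
        have : K - t ≤ 0 := by simp at ht; linarith
        exact mul_le_mul_of_nonneg_left (hΦ_anti this) (hf_nonneg t)
    have h2 : ∫ t in Ioi K, f t * Φ 0 = Φ 0 * Fbar K := by
      rw [hFbar' K hK, integral_mul_const]; ring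
    have h3 : ∫ t in Ioi K, f t * Φ (K - t) ≤ ∫ t in Ioi (0:ℝ), f t * Φ (K - t) := by
      rw [hsplit _ (hD_int K) K hK]
      have : 0 ≤ ∫ t in Ioc (0:ℝ) K, f t * Φ (K - t) := by
        apply setIntegral_nonneg measurableSet_Ioc
        intro t _; exact mul_nonneg (hf_nonneg t) (hΦ_range (K - t)).1
      linarith
    linarith
  rw [tendsto_atTop]
  intro b
  set A : ℝ := max (2 * b) 2 with hA_def
  have hA_pos : 0 < A := lt_of_lt_of_le (by norm_num) (le_max_right _ _)
  have hAb : b ≤ A / 2 := by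
    have := le_max_left (2 * b) 2; linarith
  have hev : ∀ᶠ K in atTop, Φ (K - A) / Fbar K < Φ 0 / 2 :=
    (hlight A hA_pos).eventually (gt_mem_nhds (by positivity))
  filter_upwards [hev, eventually_ge_atTop A] with K hK1 hKA
  have hK0 : (0:ℝ) ≤ K := le_trans (le_of_lt hA_pos) hKA
  set D := ∫ t in Ioi (0:ℝ), f t * Φ (K - t) with hD_def
  set N := ∫ t in Ioi (0:ℝ), t * f t * Φ (K - t) with hN_def
  have hFK : 0 < Fbar K := hFbar_pos K hK0
  have hD_pos : 0 < D := lt_of_lt_of_le (by positivity) (hD_lb K hK0)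
  -- Φ(K - A) is small
  have hΦKA : Φ (K - A) ≤ Φ 0 / 2 * Fbar K := by
    have := (div_lt_iff₀ hFK).1 hK1
    linarith
  -- D₁ bound
  have hD1 : ∫ t in Ioc (0:ℝ) A, f t * Φ (K - t) ≤ Φ (K - A) := by
    have h1 : ∫ t in Ioc (0:ℝ) A, f t * Φ (K - t)
        ≤ ∫ t in Ioc (0:ℝ) A, f t * Φ (K - A) := by
      apply setIntegral_mono_on
      · exact (hD_int K).mono_set Ioc_subset_Ioi_self
      · exact (hf_int.mono_set Ioc_subset_Ioi_self).mul_const _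
      · exact measurableSet_Ioc
      · intro t ht
        exact mul_le_mul_of_nonneg_left (hΦ_anti (by linarith [ht.2])) (hf_nonneg t)
    have h2 : ∫ t in Ioc (0:ℝ) A, f t ≤ 1 := by
      rw [← hf_prob, hsplit f hf_int A (le_of_lt hA_pos)]
      have : 0 ≤ ∫ t in Ioi A, f t :=
        setIntegral_nonneg measurableSet_Ioi fun t _ => hf_nonneg t
      linarith
    have h3 : ∫ t in Ioc (0:ℝ) A, f t * Φ (K - A) ≤ Φ (K - A) := by
      rw [integral_mul_const]
      have hnn : (0:ℝ) ≤ ∫ t in Ioc (0:ℝ) A, f t :=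
        setIntegral_nonneg measurableSet_Ioc fun t _ => hf_nonneg t
      nlinarith [(hΦ_range (K - A)).1]
    linarith
  -- D₂ large
  have hDsplit := hsplit _ (hD_int K) A (le_of_lt hA_pos)
  set D2 := ∫ t in Ioi A, f t * Φ (K - t) with hD2_def
  have hD2_lb : D / 2 ≤ D2 := by
    have : ∫ t in Ioc (0:ℝ) A, f t * Φ (K - t) ≤ D / 2 := by
      have := hD_lb K hK0
      linarith
    rw [hD_def, hDsplit] at *
    linarith
  -- N bound
  have hNsplit := hsplit _ (hN_int K) A (le_of_lt hA_pos)
  have hN2 : A * D2 ≤ ∫ t in Ioi A, t * f t * Φ (K - t) := by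
    have : ∫ t in Ioi A, A * (f t * Φ (K - t)) ≤ ∫ t in Ioi A, t * f t * Φ (K - t) := by
      apply setIntegral_mono_on
      · exact ((hD_int K).mono_set (Ioi_subset_Ioi (le_of_lt hA_pos))).const_mul _
      · exact (hN_int K).mono_set (Ioi_subset_Ioi (le_of_lt hA_pos))
      · exact measurableSet_Ioi
      · intro t ht
        simp only [mem_Ioi] at ht
        have := mul_nonneg (hf_nonneg t) (hΦ_range (K - t)).1
        nlinarith
    rw [integral_const_mul] at this
    linarith
  have hN1 : 0 ≤ ∫ t in Ioc (0:ℝ) A, t * f t * Φ (K - t) := by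
    apply setIntegral_nonneg measurableSet_Ioc
    intro t ht
    exact mul_nonneg (mul_nonneg (le_of_lt ht.1) (hf_nonneg t)) (hΦ_range (K - t)).1
  have hN_lb : A * (D / 2) ≤ N := by
    have : A * D2 ≥ A * (D / 2) := mul_le_mul_of_nonneg_left hD2_lb (le_of_lt hA_pos)
    rw [hN_def, hNsplit]
    linarith
  rw [hR K, ← hN_def, ← hD_def, le_div_iff₀ hD_pos]
  nlinarith
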